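/- Let G be a chordal graph with terminal set T ⊆ V(G), and let v be a simplicial vertex of G with closed neighbourhood N[v] = {v, a, b} of size three. If S is a subset feedback vertex set of G with respect to T containing v, then both (S ∖ {v}) ∪ {a} and (S ∖ {v}) ∪ {b} are subset feedback vertex sets of G with respect to T, each of size at most |S|. -/

import Mathlib

open SimpleGraph

variable {V : Type*}

/-- A `T`-triangle, represented as its vertex set: three pairwise adjacent
vertices at least one of which is a terminal. -/
def IsTTriangle (G : SimpleGraph V) (T Δ : Set V) : Prop :=
  ∃ a b c : V, Δ = {a, b, c} ∧ G.Adj a b ∧ G.Adj a c ∧ G.Adj b c ∧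
    (a ∈ T ∨ b ∈ T ∨ c ∈ T)

/-- The induced subgraph `G − S` contains a `T`-triangle. -/
def HasTTriangleAvoiding (G : SimpleGraph V) (T S : Set V) : Prop :=
  ∃ Δ : Set V, IsTTriangle G T Δ ∧ Δ ∩ S = ∅

/-- The induced subgraph `G − S` contains a `T`-cycle: a cycle of `G` avoiding
`S` and passing through a vertex of `T`. -/
def HasTCycleAvoiding (G : SimpleGraph V) (T S : Set V) : Prop :=
  ∃ (v : V) (c : G.Walk v v), c.IsCycle ∧ (∀ x ∈ c.support, x ∉ S) ∧
    ∃ t ∈ T, t ∈ c.support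

/-- `S` is a subset feedback vertex set of `G` with respect to `T`:
`G − S` contains no `T`-cycle. -/
def IsSubsetFVS (G : SimpleGraph V) (T S : Set V) : Prop :=
  ¬ HasTCycleAvoiding G T S

/-- A cycle has a chord: an edge of `G` between two vertices of the cycle
which is not an edge of the cycle. -/
def WalkHasChord (G : SimpleGraph V) {v : V} (c : G.Walk v v) : Prop :=
  ∃ x y : V, x ∈ c.support ∧ y ∈ c.support ∧ G.Adj x y ∧ s(x, y) ∉ c.edges

/-- A graph is chordal if every cycle of length at least four has a chord. -/
def Chordal (G : SimpleGraph V) : Prop :=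
  ∀ (v : V) (c : G.Walk v v), c.IsCycle → 4 ≤ c.length → WalkHasChord G c

/-- A bridge: an edge lying on no cycle of the graph. -/
def IsBridgeEdge (G : SimpleGraph V) (e : Sym2 V) : Prop :=
  e ∈ G.edgeSet ∧ ∀ (v : V) (c : G.Walk v v), c.IsCycle → e ∉ c.edges

/-- `(K, I)` is a split partition of `G`: `K` is a clique, `I` an independent
set, and they partition the vertex set. -/
def IsSplitPartition (G : SimpleGraph V) (K I : Set V) : Prop :=
  K ∪ I = Set.univ ∧ K ∩ I = ∅ ∧ G.IsClique K ∧ I.Pairwise fun a b => ¬ G.Adj a b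

/-- The closed neighbourhood `N[v]` of a vertex. -/
def closedNbhd (G : SimpleGraph V) (v : V) : Set V := insert v (G.neighborSet v)

/-- A vertex is simplicial if its closed neighbourhood is a clique. -/
def IsSimplicial (G : SimpleGraph V) (v : V) : Prop := G.IsClique (closedNbhd G v)

/-- A maximal clique. -/
def IsMaxClique (G : SimpleGraph V) (C : Set V) : Prop :=
  G.IsClique C ∧ ∀ C' : Set V, G.IsClique C' → C ⊆ C' → C' = C

/-- A matching, as a set of edges of `G` no two of which share an endvertex. -/
def IsEdgeMatching (G : SimpleGraph V) (M : Set (Sym2 V)) : Prop :=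
  M ⊆ G.edgeSet ∧ ∀ e ∈ M, ∀ f ∈ M, e ≠ f → ∀ z : V, z ∈ e → z ∉ f

/-- A set of edges saturates a vertex if some edge of it is incident with it. -/
def Saturates (M : Set (Sym2 V)) (z : V) : Prop := ∃ e ∈ M, z ∈ e

/-- `M` is a `t`-expansion of `X` into `Y`: every edge of `M` goes between `X`
and `Y`, every vertex of `X` is incident with exactly `t` edges of `M`, and the
edges of `M` are incident with exactly `t * |X|` distinct vertices of `Y`. -/
def IsExpansion (G : SimpleGraph V) (t : ℕ) (X Y : Set V) (M : Set (Sym2 V)) : Prop :=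
  M ⊆ G.edgeSet ∧ (∀ e ∈ M, ∃ x ∈ X, ∃ y ∈ Y, e = s(x, y)) ∧
    (∀ x ∈ X, {e ∈ M | x ∈ e}.ncard = t) ∧
    {y ∈ Y | Saturates M y}.ncard = t * X.ncard

/-- Exchange lemma: if every neighbour of `v` is `x` or `y`, and `S` is a
subset-FVS containing `v`, then `(S \ {v}) ∪ {x}` is a subset-FVS. -/
lemma exchange_aux {V : Type} (G : SimpleGraph V) (T : Set V) (v x y : V)
    (hN : ∀ u, G.Adj v u → u = x ∨ u = y)
    (S : Set V) (hS : IsSubsetFVS G T S) :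
    IsSubsetFVS G T ((S \ {v}) ∪ {x}) := by
  classical
  rintro ⟨w0, c, hcyc, havoid, t, htT, hts⟩
  by_cases hv : v ∈ c.support
  · -- the cycle passes through `v`, so `x` is on it; contradiction.
    have hx : x ∉ c.support := fun h => havoid x h (by simp)
    have hcyc' := hcyc.rotate hv
    have hnil : ¬ (c.rotate v hv).Nil := hcyc'.not_nil
    obtain ⟨w, hvw, p, hcons⟩ := Walk.not_nil_iff.mp hnil
    rw [hcons] at hcyc'
    rw [Walk.cons_isCycle_iff] at hcyc'
    have hwv : w ≠ v := hvw.ne'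
    have hrnil : ¬ p.reverse.Nil := Walk.not_nil_of_ne hwv.symm
    obtain ⟨u, hvu, q, hq⟩ := Walk.not_nil_iff.mp hrnil
    -- both `w` and `u` are neighbours of `v` lying on the cycle.
    have hwp : w ∈ p.support := Walk.start_mem_support p
    have hup : u ∈ p.support := by
      have : u ∈ p.reverse.support := by
        rw [hq, Walk.support_cons]
        exact List.mem_cons_of_mem _ (Walk.start_mem_support q)
      rwa [Walk.support_reverse, List.mem_reverse] at this
    have hmem : ∀ z ∈ p.support, z ∈ c.support := by
      intro z hz
      have h1 : z ∈ (c.rotate v hv).support.tail := by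
        rw [hcons, Walk.support_cons]; exact hz
      have h2 : z ∈ c.support.tail :=
        ((Walk.support_rotate c v hv).perm.mem_iff).mp h1
      exact List.mem_of_mem_tail h2
    -- `u ≠ w` since the edge `s(v,u)` is in `p` but `s(v,w)` is not.
    have hedge : s(v, u) ∈ p.edges := by
      have : s(v, u) ∈ p.reverse.edges := by
        rw [hq, Walk.edges_cons]; exact List.mem_cons_self
      rwa [Walk.edges_reverse, List.mem_reverse] at this
    have huw : u ≠ w := by
      rintro rfl
      exact hcyc'.2 hedge
    rcases hN w hvw with rfl | rfl
    · exact hx (hmem _ hwp)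
    · rcases hN u hvu with rfl | rfl
      · exact hx (hmem _ hup)
      · exact huw rfl
  · -- the cycle avoids `v`, hence avoids `S`.
    exact hS ⟨w0, c, hcyc, fun z hz hzS =>
      havoid z hz (Or.inl ⟨hzS, fun hzv => hv (hzv ▸ hz)⟩), t, htT, hts⟩

/-- for a simplicial vertex `v` with `N[v] = {v, a, b}`, a
solution containing `v` can exchange `v` for `a` or for `b`. -/
theorem stmt17 {V : Type} [Fintype V] (G : SimpleGraph V) (T : Set V)
    (hG : Chordal G) (v a b : V)
    (hsimp : IsSimplicial G v)
    (hC : closedNbhd G v = {v, a, b})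
    (hcard : ({v, a, b} : Set V).ncard = 3)
    (S : Set V) (hS : IsSubsetFVS G T S) (hvS : v ∈ S) :
    (IsSubsetFVS G T ((S \ {v}) ∪ {a}) ∧ ((S \ {v}) ∪ {a}).ncard ≤ S.ncard) ∧
    (IsSubsetFVS G T ((S \ {v}) ∪ {b}) ∧ ((S \ {v}) ∪ {b}).ncard ≤ S.ncard) := by
  have hN : ∀ u, G.Adj v u → u = a ∨ u = b := by
    intro u hu
    have : u ∈ closedNbhd G v := Set.mem_insert_of_mem _ hu
    rw [hC] at this
    rcases this with h | h | h
    · exact absurd h.symm hu.ne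
    · exact Or.inl h
    · exact Or.inr h
  have hcard' : ∀ x : V, ((S \ {v}) ∪ {x}).ncard ≤ S.ncard := by
    intro x
    rw [Set.union_singleton]
    calc (insert x (S \ {v})).ncard ≤ (S \ {v}).ncard + 1 := Set.ncard_insert_le _ _
      _ = S.ncard := Set.ncard_diff_singleton_add_one hvS (Set.toFinite S)
  exact ⟨⟨exchange_aux G T v a b hN S hS, hcard' a⟩,
    ⟨exchange_aux G T v b a (fun u hu => (hN u hu).symm) S hS, hcard' b⟩⟩
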